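/- For every n ≥ 2, the sequence (v_n) satisfies v_{n+1} = 1 + (Π_{1≤i≤n} v_i)·(Σ_{1≤i≤n} 1/v_i). Equivalently, Σ_{1≤i<j≤n} 1/(v_i v_j) = 1 − 1/(v_1·v_2·…·v_n). -/

import Mathlib

/-- `v` is the sequence defined by `v 1 = 1`, `v 2 = 2`, and for `n ≥ 2`,
`v (n+1) = 1 + (Σ_{1≤i≤n} 1/v_i) / (1 - Σ_{1≤i<j≤n} 1/(v_i v_j))`.
These equations determine `v n` uniquely for all `n ≥ 1`. -/
def vSpec (v : ℕ → ℚ) : Prop :=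
  v 1 = 1 ∧ v 2 = 2 ∧ ∀ n, 2 ≤ n →
    v (n + 1) = 1 + (∑ i ∈ Finset.Icc 1 n, 1 / v i) /
      (1 - ∑ p ∈ (Finset.Icc 1 n ×ˢ Finset.Icc 1 n).filter (fun p => p.1 < p.2),
        1 / (v p.1 * v p.2))

lemma pairSplit (n : ℕ) :
    (Finset.Icc 1 (n+1) ×ˢ Finset.Icc 1 (n+1)).filter (fun p => p.1 < p.2) =
    (Finset.Icc 1 n ×ˢ Finset.Icc 1 n).filter (fun p => p.1 < p.2) ∪
      (Finset.Icc 1 n).image (fun i => (i, n+1)) := by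
  ext ⟨a, b⟩
  simp only [Finset.mem_filter, Finset.mem_product, Finset.mem_Icc, Finset.mem_union,
    Finset.mem_image, Prod.mk.injEq]
  constructor
  · rintro ⟨⟨⟨ha1, ha2⟩, hb1, hb2⟩, hab⟩
    by_cases hb : b = n + 1
    · right; exact ⟨a, ⟨ha1, by omega⟩, rfl, hb.symm⟩
    · left; omega
  · rintro (⟨⟨⟨ha1, ha2⟩, hb1, hb2⟩, hab⟩ | ⟨i, ⟨hi1, hi2⟩, rfl, rfl⟩) <;> omega

lemma vAux (v : ℕ → ℚ) (hv : vSpec v) : ∀ n, 2 ≤ n →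
    (∀ i ∈ Finset.Icc 1 n, 0 < v i) ∧
    ∑ p ∈ (Finset.Icc 1 n ×ˢ Finset.Icc 1 n).filter (fun p => p.1 < p.2),
        1 / (v p.1 * v p.2) = 1 - 1 / ∏ i ∈ Finset.Icc 1 n, v i := by
  obtain ⟨h1, h2, hrec⟩ := hv
  intro n hn
  induction n, hn using Nat.le_induction with
  | base =>
    constructor
    · intro i hi
      simp only [Finset.mem_Icc] at hi
      obtain ⟨hi1, hi2⟩ := hi
      interval_cases i <;> simp [h1, h2]
    · have : (Finset.Icc 1 2 ×ˢ Finset.Icc 1 2).filter (fun p => p.1 < p.2) = {(1,2)} := by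
        decide
      rw [this]
      simp [h1, h2, show Finset.Icc 1 2 = {1, 2} by decide]
      norm_num
  | succ n hn ih =>
    obtain ⟨hpos, hT⟩ := ih
    set S := ∑ i ∈ Finset.Icc 1 n, 1 / v i with hS
    set P := ∏ i ∈ Finset.Icc 1 n, v i with hP
    have hPpos : 0 < P := Finset.prod_pos hpos
    have hSpos : 0 < S := by
      apply Finset.sum_pos
      · intro i hi; exact one_div_pos.mpr (hpos i hi)
      · exact ⟨1, by simp [Finset.mem_Icc]; omega⟩
    have hvn1 : v (n + 1) = 1 + P * S := by
      rw [hrec n hn, hT]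
      have : (1 : ℚ) - (1 - 1 / P) = 1 / P := by ring
      rw [this, one_div, div_inv_eq_mul, ← hS]
      ring
    have hvn1pos : 0 < v (n + 1) := by rw [hvn1]; positivity
    have hIcc : Finset.Icc 1 (n + 1) = insert (n + 1) (Finset.Icc 1 n) := by
      ext i; simp only [Finset.mem_Icc, Finset.mem_insert]; omega
    have hnot : n + 1 ∉ Finset.Icc 1 n := by simp
    constructor
    · intro i hi
      rw [hIcc, Finset.mem_insert] at hi
      rcases hi with rfl | hi
      · exact hvn1pos
      · exact hpos i hi
    · rw [pairSplit n, Finset.sum_union, Finset.sum_image (by intro a _ b _ h; simpa using h),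
        hT, hIcc, Finset.prod_insert hnot]
      · have : ∑ i ∈ Finset.Icc 1 n, 1 / (v i * v (n + 1)) = S / v (n + 1) := by
          rw [hS, Finset.sum_div]
          apply Finset.sum_congr rfl
          intro i _
          rw [div_div]
        rw [this, hvn1, ← hP]
        have h1P : P ≠ 0 := ne_of_gt hPpos
        have h2P : (1 : ℚ) + P * S ≠ 0 := by positivity
        field_simp
        ring
      · rw [Finset.disjoint_left]
        rintro ⟨a, b⟩ hab hab'
        simp only [Finset.mem_filter, Finset.mem_product, Finset.mem_Icc] at hab
        simp only [Finset.mem_image, Prod.mk.injEq] at hab'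
        obtain ⟨i, _, rfl, rfl⟩ := hab'
        omega

/-- For `n ≥ 2`, `v_{n+1} = 1 + (Π_{1≤i≤n} v_i)·(Σ_{1≤i≤n} 1/v_i)`; equivalently,
`Σ_{1≤i<j≤n} 1/(v_i v_j) = 1 − 1/(v_1 ⋯ v_n)`. -/
theorem stmt6 (v : ℕ → ℚ) (hv : vSpec v) (n : ℕ) (hn : 2 ≤ n) :
    v (n + 1) = 1 + (∏ i ∈ Finset.Icc 1 n, v i) * (∑ i ∈ Finset.Icc 1 n, 1 / v i) ∧
    ∑ p ∈ (Finset.Icc 1 n ×ˢ Finset.Icc 1 n).filter (fun p => p.1 < p.2),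
        1 / (v p.1 * v p.2) = 1 - 1 / ∏ i ∈ Finset.Icc 1 n, v i := by
  obtain ⟨hpos, hT⟩ := vAux v hv n hn
  have hPpos : 0 < ∏ i ∈ Finset.Icc 1 n, v i := Finset.prod_pos hpos
  refine ⟨?_, hT⟩
  rw [hv.2.2 n hn, hT]
  have : (1 : ℚ) - (1 - 1 / ∏ i ∈ Finset.Icc 1 n, v i) = 1 / ∏ i ∈ Finset.Icc 1 n, v i := by
    ring
  rw [this]
  field_simp
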